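/- arXiv:2512.08432 — 7 statements merged into one kernel-verified Lean document; each statement's English description precedes it below -/
import Mathlib

section
/- Let H be an N×N complex Hermitian matrix with H² = H, let |ψ⟩ ∈ ℂ^N be a unit vector, ψ = |ψ⟩⟨ψ|, and set q := ⟨ψ|H|ψ⟩. Define the skew-Hermitian matrices X := [H, ψ] and Y := i[H, X]. Then ‖X‖_F = ‖Y‖_F = √(2q(1−q)) and Re Tr(X† Y) = 0. -/
open Matrix

/-- The rank-one projector `|ψ⟩⟨ψ|` associated with a vector `ψ`. -/
noncomputable def rankOneProj {N : ℕ} (ψ : Fin N → ℂ) : Matrix (Fin N) (Fin N) ℂ :=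
  Matrix.vecMulVec ψ (star ψ)

/-- The Frobenius norm `‖A‖_F = √(Tr(A†A))`. -/
noncomputable def frobNorm {N : ℕ} (A : Matrix (Fin N) (Fin N) ℂ) : ℝ :=
  Real.sqrt (Matrix.trace (Aᴴ * A)).re

lemma mul_rankOneProj {N : ℕ} (ψ : Fin N → ℂ) (A : Matrix (Fin N) (Fin N) ℂ) :
    A * rankOneProj ψ = Matrix.vecMulVec (A *ᵥ ψ) (star ψ) := by
  ext i j
  simp [rankOneProj, Matrix.mul_apply, Matrix.vecMulVec_apply, Matrix.mulVec, dotProduct,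
    Finset.sum_mul, mul_assoc]

lemma trace_vecMulVec {N : ℕ} (w v : Fin N → ℂ) :
    Matrix.trace (Matrix.vecMulVec w v) = w ⬝ᵥ v := by
  simp [Matrix.trace, Matrix.vecMulVec_apply, dotProduct, Matrix.diag]

lemma rankOneProj_mulVec {N : ℕ} (ψ v : Fin N → ℂ) :
    rankOneProj ψ *ᵥ v = (star ψ ⬝ᵥ v) • ψ := by
  ext i
  simp only [rankOneProj, Matrix.mulVec, Matrix.vecMulVec_apply, dotProduct,
    Pi.smul_apply, smul_eq_mul, Finset.sum_mul]
  refine Finset.sum_congr rfl fun x _ => ?_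
  ring

lemma conjTranspose_rankOneProj {N : ℕ} (ψ : Fin N → ℂ) :
    (rankOneProj ψ)ᴴ = rankOneProj ψ := by
  ext i j
  simp [rankOneProj, Matrix.conjTranspose_apply, Matrix.vecMulVec_apply, mul_comm]

theorem stmt_1 {N : ℕ} (H : Matrix (Fin N) (Fin N) ℂ)
    (hHerm : H.IsHermitian) (hProj : H * H = H)
    (ψ : Fin N → ℂ) (hψ : star ψ ⬝ᵥ ψ = 1)
    (q : ℝ) (hq : star ψ ⬝ᵥ (H *ᵥ ψ) = (q : ℂ))
    (X Y : Matrix (Fin N) (Fin N) ℂ)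
    (hX : X = H * rankOneProj ψ - rankOneProj ψ * H)
    (hY : Y = Complex.I • (H * X - X * H)) :
    frobNorm X = Real.sqrt (2 * q * (1 - q)) ∧
    frobNorm Y = Real.sqrt (2 * q * (1 - q)) ∧
    (Matrix.trace (Xᴴ * Y)).re = 0 := by
  set P := rankOneProj ψ with hP
  set c : ℂ := (q : ℂ) with hc
  -- basic vector facts
  have hH2v : ∀ v : Fin N → ℂ, H *ᵥ (H *ᵥ v) = H *ᵥ v := by
    intro v; rw [Matrix.mulVec_mulVec, hProj]
  have hPv : ∀ v : Fin N → ℂ, P *ᵥ v = (star ψ ⬝ᵥ v) • ψ := rankOneProj_mulVec ψ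
  have hdot1 : star ψ ⬝ᵥ ψ = 1 := hψ
  have hdotq : star ψ ⬝ᵥ (H *ᵥ ψ) = c := hq
  -- key trace lemma
  have key : ∀ A : Matrix (Fin N) (Fin N) ℂ,
      Matrix.trace (A * P) = star ψ ⬝ᵥ (A *ᵥ ψ) := by
    intro A
    rw [hP, mul_rankOneProj, trace_vecMulVec, dotProduct_comm]
  -- the nine-word traces
  have w1 : Matrix.trace ((P * H) * (H * P)) = c := by
    rw [show (P * H) * (H * P) = ((P * H) * H) * P by simp only [Matrix.mul_assoc], key]
    simp [← Matrix.mulVec_mulVec, hH2v, hPv, dotProduct_smul, hdot1, hdotq,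
      smul_eq_mul]
  have w2 : Matrix.trace ((P * H) * (P * H)) = c * c := by
    rw [show (P * H) * (P * H) = ((P * H) * P) * H by simp only [Matrix.mul_assoc],
      Matrix.trace_mul_comm, ← Matrix.mul_assoc, key]
    simp [← Matrix.mulVec_mulVec, hH2v, hPv, dotProduct_smul, hdot1, hdotq,
      Matrix.mulVec_smul, smul_eq_mul, mul_comm]
  have w3 : Matrix.trace ((H * P) * (H * P)) = c * c := by
    rw [show (H * P) * (H * P) = ((H * P) * H) * P by simp only [Matrix.mul_assoc], key]
    simp [← Matrix.mulVec_mulVec, hH2v, hPv, dotProduct_smul, hdot1, hdotq,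
      Matrix.mulVec_smul, smul_eq_mul, mul_comm]
  have w4 : Matrix.trace ((H * P) * (P * H)) = c := by
    rw [show (H * P) * (P * H) = ((H * P) * P) * H by simp only [Matrix.mul_assoc],
      Matrix.trace_mul_comm, ← Matrix.mul_assoc, key]
    simp [← Matrix.mulVec_mulVec, hH2v, hPv, dotProduct_smul, hdot1, hdotq,
      Matrix.mulVec_smul, smul_eq_mul, mul_comm]
  have w5 : Matrix.trace ((P * H) * (H * P * H)) = c * c := by
    rw [show (P * H) * (H * P * H) = ((P * H) * (H * P)) * H by simp only [Matrix.mul_assoc],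
      Matrix.trace_mul_comm, ← Matrix.mul_assoc, ← Matrix.mul_assoc, ← Matrix.mul_assoc,
      show H * P * H * H * P = (H * P * H * H) * P by simp only [Matrix.mul_assoc], key]
    simp [← Matrix.mulVec_mulVec, hH2v, hPv, dotProduct_smul, hdot1, hdotq,
      Matrix.mulVec_smul, smul_eq_mul, mul_comm]
  have w6 : Matrix.trace ((H * P) * (H * P * H)) = c * c := by
    rw [show (H * P) * (H * P * H) = ((H * P) * (H * P)) * H by simp only [Matrix.mul_assoc],
      Matrix.trace_mul_comm, ← Matrix.mul_assoc,
      show H * (H * P) * (H * P) = (H * (H * P) * H) * P by simp only [Matrix.mul_assoc], key]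
    simp [← Matrix.mulVec_mulVec, hH2v, hPv, dotProduct_smul, hdot1, hdotq,
      Matrix.mulVec_smul, smul_eq_mul, mul_comm]
  have w7 : Matrix.trace ((H * P * H) * (H * P)) = c * c := by
    rw [show (H * P * H) * (H * P) = ((H * P * H) * H) * P by simp only [Matrix.mul_assoc], key]
    simp [← Matrix.mulVec_mulVec, hH2v, hPv, dotProduct_smul, hdot1, hdotq,
      Matrix.mulVec_smul, smul_eq_mul, mul_comm]
  have w8 : Matrix.trace ((H * P * H) * (P * H)) = c * c := by
    rw [show (H * P * H) * (P * H) = ((H * P * H) * P) * H by simp only [Matrix.mul_assoc],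
      Matrix.trace_mul_comm, ← Matrix.mul_assoc,
      show H * (H * P * H) * P = (H * (H * P * H)) * P by rfl, key]
    simp [← Matrix.mulVec_mulVec, hH2v, hPv, dotProduct_smul, hdot1, hdotq,
      Matrix.mulVec_smul, smul_eq_mul, mul_comm]
  have w9 : Matrix.trace ((H * P * H) * (H * P * H)) = c * c := by
    rw [show (H * P * H) * (H * P * H) = ((H * P * H) * (H * P)) * H by simp only [Matrix.mul_assoc],
      Matrix.trace_mul_comm, ← Matrix.mul_assoc,
      show H * (H * P * H) * (H * P) = (H * (H * P * H) * H) * P by simp only [Matrix.mul_assoc], key]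
    simp [← Matrix.mulVec_mulVec, hH2v, hPv, dotProduct_smul, hdot1, hdotq,
      Matrix.mulVec_smul, smul_eq_mul, mul_comm]
  -- Hermitian facts
  have hHH : Hᴴ = H := hHerm
  have hPH : Pᴴ = P := conjTranspose_rankOneProj ψ
  have hXH : Xᴴ = P * H - H * P := by
    rw [hX, Matrix.conjTranspose_sub, Matrix.conjTranspose_mul, Matrix.conjTranspose_mul,
      hHH, hPH]
  -- trace of XᴴX
  have trX : Matrix.trace (Xᴴ * X) = 2 * c - 2 * (c * c) := by
    rw [hXH, hX]
    rw [Matrix.sub_mul, Matrix.mul_sub, Matrix.mul_sub, Matrix.trace_sub, Matrix.trace_sub,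
      Matrix.trace_sub]
    rw [w1, w2, w3, w4]
    ring
  -- A := H*X - X*H in normal form
  have hA : H * X - X * H = H * P + P * H - ((H * P * H) + (H * P * H)) := by
    rw [hX]
    rw [Matrix.mul_sub, Matrix.sub_mul, ← Matrix.mul_assoc, hProj,
      Matrix.mul_assoc P H H, hProj]
    simp only [← Matrix.mul_assoc]
    abel
  set A : Matrix (Fin N) (Fin N) ℂ := H * X - X * H with hAdef
  have hAHerm : Aᴴ = A := by
    rw [hA]
    simp only [Matrix.conjTranspose_sub, Matrix.conjTranspose_add, Matrix.conjTranspose_mul,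
      hHH, hPH, ← Matrix.mul_assoc]
    abel
  -- trace of A*A
  have trA : Matrix.trace (A * A) = 2 * c - 2 * (c * c) := by
    rw [hA]
    simp only [Matrix.sub_mul, Matrix.mul_sub, Matrix.add_mul, Matrix.mul_add,
      Matrix.trace_sub, Matrix.trace_add]
    simp only [w1, w2, w3, w4, w5, w6, w7, w8, w9]
    ring
  -- trace of YᴴY
  have trY : Matrix.trace (Yᴴ * Y) = 2 * c - 2 * (c * c) := by
    have hII : star Complex.I * Complex.I = 1 := by
      simp [Complex.star_def, Complex.conj_I]
    rw [hY, Matrix.conjTranspose_smul, hAHerm, Matrix.smul_mul, Matrix.mul_smul,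
      smul_smul, Matrix.trace_smul, trA, hII, one_smul]
  -- X is skew-Hermitian
  have hXneg : Xᴴ = -X := by
    rw [hXH, hX, neg_sub]
  -- trace of XᴴY vanishes
  have trXY : Matrix.trace (Xᴴ * Y) = 0 := by
    rw [hY, Matrix.mul_smul, Matrix.trace_smul, hXneg, Matrix.neg_mul, Matrix.trace_neg,
      Matrix.mul_sub, Matrix.trace_sub, ← Matrix.mul_assoc,
      Matrix.trace_mul_comm (X * H) X]
    simp
  have hval : 2 * c - 2 * (c * c) = ((2 * q * (1 - q) : ℝ) : ℂ) := by
    rw [hc]; push_cast; ring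
  refine ⟨?_, ?_, ?_⟩
  · rw [frobNorm, trX, hval, Complex.ofReal_re]
  · rw [frobNorm, trY, hval, Complex.ofReal_re]
  · rw [trXY, Complex.zero_re]
end

section
/- Let H be an N×N complex Hermitian matrix with H² = H, let |ψ0⟩ ∈ ℂ^N be a unit vector, ψ0 = |ψ0⟩⟨ψ0|, and set X0 := [H, ψ0], Y0 := i[H, X0]. Then for every real θ, the conjugation by the matrix exponential e^{iθH} satisfies e^{iθH} ψ0 e^{−iθH} = ψ0 + i sin(θ) X0 + i (cos(θ) − 1) Y0; equivalently, i e^{iθH} ψ0 e^{−iθH} = i ψ0 − sin(θ) X0 + (cos(θ) − 1) Y0. -/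
open Matrix

/-- The gate `e^{iθM}` for a matrix `M` and a real angle `θ`. -/
noncomputable def expGate {N : ℕ} (M : Matrix (Fin N) (Fin N) ℂ) (θ : ℝ) :
    Matrix (Fin N) (Fin N) ℂ :=
  NormedSpace.exp ((Complex.I * (θ : ℂ)) • M)

section ExpAux

attribute [local instance] Matrix.linftyOpNormedAddCommGroup Matrix.linftyOpNormedRing
  Matrix.linftyOpNormedAlgebra

/-- Exponential of a scalar multiple of an idempotent matrix. -/
lemma exp_smul_idem {N : ℕ} (P : Matrix (Fin N) (Fin N) ℂ) (hP : P * P = P) (c : ℂ) :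
    NormedSpace.exp (c • P) = 1 + (Complex.exp c - 1) • P := by
  have hpow : ∀ n : ℕ, P ^ (n + 1) = P := by
    intro n
    induction n with
    | zero => simp [pow_succ]
    | succ k ih => rw [pow_succ, ih, hP]
  rw [NormedSpace.exp_eq_tsum ℂ]
  beta_reduce
  have hsum : Summable fun n : ℕ => ((n.factorial : ℂ)⁻¹) • (c • P) ^ n :=
    NormedSpace.expSeries_summable' (𝕂 := ℂ) (c • P)
  rw [hsum.tsum_eq_zero_add]
  have h1 : ∀ n : ℕ, ((((n+1).factorial : ℂ))⁻¹) • (c • P) ^ (n+1)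
      = ((((n+1).factorial : ℂ))⁻¹ * c ^ (n+1)) • P := by
    intro n
    rw [smul_pow, hpow, smul_smul]
  simp only [h1]
  have hsum2 : Summable fun n : ℕ => ((((n+1).factorial : ℂ))⁻¹ * c ^ (n+1)) := by
    have := (NormedSpace.expSeries_div_summable c).comp_injective (add_left_injective 1)
    simpa [div_eq_mul_inv, mul_comm, Function.comp_def] using this
  rw [hsum2.tsum_smul_const]
  have hc : (∑' n : ℕ, ((((n+1).factorial : ℂ))⁻¹ * c ^ (n+1))) = Complex.exp c - 1 := by
    have hce : Complex.exp c = ∑' n : ℕ, ((n.factorial : ℂ)⁻¹) • c ^ n := by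
      rw [Complex.exp_eq_exp_ℂ, NormedSpace.exp_eq_tsum ℂ]
    have hs : Summable fun n : ℕ => ((n.factorial : ℂ)⁻¹) • c ^ n :=
      NormedSpace.expSeries_summable' (𝕂 := ℂ) c
    rw [hs.tsum_eq_zero_add] at hce
    simp only [smul_eq_mul] at hce ⊢
    simp at hce
    rw [hce]; ring
  rw [hc]
  simp

/-- `expGate` of an idempotent matrix. -/
lemma expGate_idem {N : ℕ} (H : Matrix (Fin N) (Fin N) ℂ) (hP : H * H = H) (θ : ℝ) :
    expGate H θ = 1 + (Complex.exp (Complex.I * θ) - 1) • H :=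
  exp_smul_idem H hP _

end ExpAux

/-- The core algebraic identity, for arbitrary matrices `H`, `P` with `H * H = H`. -/
lemma key_conj_identity {N : ℕ} (H P : Matrix (Fin N) (Fin N) ℂ) (hProj : H * H = H) (θ : ℝ)
    (a b s t : ℂ)
    (ha : a = Complex.exp (Complex.I * θ) - 1)
    (hb : b = Complex.exp (Complex.I * ((-θ : ℝ) : ℂ)) - 1)
    (hs : s = ((Real.sin θ : ℝ) : ℂ)) (ht : t = ((Real.cos θ - 1 : ℝ) : ℂ)) :
    Complex.I • ((1 + a • H) * P * (1 + b • H)) =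
      Complex.I • P - s • (H * P - P * H) +
        t • (Complex.I • (H * (H * P - P * H) - (H * P - P * H) * H)) := by
  have h1 : H * (H * P) = H * P := by rw [← mul_assoc, hProj]
  have h2 : H * (P * H) = H * P * H := by rw [← mul_assoc]
  have h3 : H * P * H * H = H * P * H := by rw [mul_assoc, hProj]
  have h4 : P * H * H = P * H := by rw [mul_assoc, hProj]
  have ha' : a = (Real.cos θ : ℂ) + (Real.sin θ : ℂ) * Complex.I - 1 := by
    rw [ha, mul_comm, Complex.exp_mul_I, Complex.ofReal_cos, Complex.ofReal_sin]
  have hb' : b = (Real.cos θ : ℂ) - (Real.sin θ : ℂ) * Complex.I - 1 := by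
    rw [hb, show Complex.I * ((-θ : ℝ) : ℂ) = ((-θ : ℝ) : ℂ) * Complex.I from mul_comm _ _,
      Complex.exp_mul_I]
    push_cast
    simp [Complex.cos_neg, Complex.sin_neg, ← Complex.ofReal_cos, ← Complex.ofReal_sin]
    ring
  have hpyth : ((Real.cos θ : ℂ))^2 + ((Real.sin θ : ℂ))^2 = 1 := by
    push_cast [← Complex.ofReal_pow]
    norm_cast
    exact Real.cos_sq_add_sin_sq θ
  simp only [add_mul, mul_add, mul_sub, sub_mul, one_mul, mul_one, smul_mul_assoc,
    mul_smul_comm, smul_add, smul_sub, smul_smul, h1, h2, h3, h4]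
  match_scalars <;> simp only [ha', hb', hs, ht, Complex.ofReal_sub, Complex.ofReal_one] <;>
    first
      | ring1
      | linear_combination (Real.sin θ : ℂ) * Complex.I_sq
      | linear_combination (-(Real.sin θ : ℂ)) * Complex.I_sq
      | linear_combination Complex.I * hpyth - Complex.I * ((Real.sin θ : ℂ))^2 * Complex.I_sq

theorem stmt_3 {N : ℕ} (H : Matrix (Fin N) (Fin N) ℂ)
    (hHerm : H.IsHermitian) (hProj : H * H = H)
    (ψ₀ : Fin N → ℂ) (hψ₀ : star ψ₀ ⬝ᵥ ψ₀ = 1)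
    (X₀ Y₀ : Matrix (Fin N) (Fin N) ℂ)
    (hX₀ : X₀ = H * rankOneProj ψ₀ - rankOneProj ψ₀ * H)
    (hY₀ : Y₀ = Complex.I • (H * X₀ - X₀ * H)) :
    ∀ θ : ℝ,
      Complex.I • (expGate H θ * rankOneProj ψ₀ * expGate H (-θ)) =
        Complex.I • rankOneProj ψ₀ - (Real.sin θ : ℂ) • X₀ +
          ((Real.cos θ - 1 : ℝ) : ℂ) • Y₀ := by
  intro θ
  rw [expGate_idem H hProj θ, expGate_idem H hProj (-θ), hY₀, hX₀]
  exact key_conj_identity H (rankOneProj ψ₀) hProj θ _ _ _ _ rfl rfl rfl rfl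
end

section
/- Let H be an N×N complex Hermitian matrix with H² = H, let |ψ0⟩ ∈ ℂ^N be a unit vector, ψ0 = |ψ0⟩⟨ψ0|, X0 := [H, ψ0], Y0 := i[H, X0], and S := span_ℂ{|ψ0⟩, H|ψ0⟩}. Then for every unit vector |ψ⟩ ∈ S with ψ := |ψ⟩⟨ψ| and q := ⟨ψ|H|ψ⟩, the commutator [H, ψ] lies in the real linear span W := span_ℝ{X0, Y0} of X0 and Y0, and ‖[H, ψ]‖_F = √(2q(1−q)). -/
open Matrix

lemma mul_vmv {N : ℕ} (H : Matrix (Fin N) (Fin N) ℂ) (x w : Fin N → ℂ) :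
    H * vecMulVec x w = vecMulVec (H *ᵥ x) w := by
  ext i j
  simp [mul_apply, vecMulVec_apply, mulVec, dotProduct, Finset.sum_mul, mul_assoc]

lemma vmv_mul {N : ℕ} (H : Matrix (Fin N) (Fin N) ℂ) (hH : H.IsHermitian)
    (x u : Fin N → ℂ) :
    vecMulVec x (star u) * H = vecMulVec x (star (H *ᵥ u)) := by
  ext i j
  simp only [mul_apply, vecMulVec_apply, Pi.star_apply, mulVec, dotProduct, star_sum, star_mul',
    Finset.mul_sum]
  refine Finset.sum_congr rfl fun k _ => ?_
  rw [← hH.apply k j]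
  ring

lemma trace_vmv_mul_vmv {N : ℕ} (x w x' w' : Fin N → ℂ) :
    trace (vecMulVec x w * vecMulVec x' w') = (w ⬝ᵥ x') * (w' ⬝ᵥ x) := by
  simp only [trace, diag_apply, mul_apply, vecMulVec_apply, dotProduct, Finset.sum_mul,
    Finset.mul_sum]
  refine Finset.sum_congr rfl fun k _ => Finset.sum_congr rfl fun i _ => by ring

lemma vmv_conjT {N : ℕ} (x w : Fin N → ℂ) :
    (vecMulVec x (star w))ᴴ = vecMulVec w (star x) := by
  ext i j
  simp [conjTranspose_apply, vecMulVec_apply, mul_comm]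

lemma keylem (a b p r p' r' : ℂ) :
    (a + b) * r * ((starRingEnd ℂ) a * p' + (starRingEnd ℂ) b * r')
      - (a * p + b * r) * (((starRingEnd ℂ) a + (starRingEnd ℂ) b) * r')
    = ((((a + b) * (starRingEnd ℂ) a).re : ℝ) : ℂ) * (r * p' - p * r')
      + (((b * (starRingEnd ℂ) a).im : ℝ) : ℂ) * Complex.I * (r * p' + p * r' - 2 * (r * r')) := by
  have hx := Complex.add_conj ((a + b) * (starRingEnd ℂ) a)
  have hy := Complex.sub_conj (b * (starRingEnd ℂ) a)
  simp only [map_add, _root_.map_mul, Complex.conj_conj] at hx hy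
  push_cast at hx hy
  linear_combination (r * p' - p * r') * hx / 2 + (r * p' + p * r' - 2 * (r * r')) * hy / 2

theorem stmt_5 {N : ℕ} (H : Matrix (Fin N) (Fin N) ℂ)
    (hHerm : H.IsHermitian) (hProj : H * H = H)
    (ψ₀ : Fin N → ℂ) (hψ₀ : star ψ₀ ⬝ᵥ ψ₀ = 1)
    (X₀ Y₀ : Matrix (Fin N) (Fin N) ℂ)
    (hX₀ : X₀ = H * rankOneProj ψ₀ - rankOneProj ψ₀ * H)
    (hY₀ : Y₀ = Complex.I • (H * X₀ - X₀ * H))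
    (ψ : Fin N → ℂ) (hψunit : star ψ ⬝ᵥ ψ = 1)
    (hψS : ψ ∈ Submodule.span ℂ ({ψ₀, H *ᵥ ψ₀} : Set (Fin N → ℂ)))
    (q : ℝ) (hq : star ψ ⬝ᵥ (H *ᵥ ψ) = (q : ℂ)) :
    (∃ x y : ℝ,
        H * rankOneProj ψ - rankOneProj ψ * H = (x : ℂ) • X₀ + (y : ℂ) • Y₀)
    ∧ frobNorm (H * rankOneProj ψ - rankOneProj ψ * H) =
        Real.sqrt (2 * q * (1 - q)) := by
  set v₀ : Fin N → ℂ := H *ᵥ ψ₀ with hv₀def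
  set v : Fin N → ℂ := H *ᵥ ψ with hvdef
  have hv₀fix : H *ᵥ v₀ = v₀ := by rw [hv₀def, mulVec_mulVec, hProj]
  have hX₀' : X₀ = vecMulVec v₀ (star ψ₀) - vecMulVec ψ₀ (star v₀) := by
    rw [hX₀, rankOneProj, mul_vmv, vmv_mul H hHerm, hv₀def]
  have hY₀' : Y₀ = Complex.I • (vecMulVec v₀ (star ψ₀) + vecMulVec ψ₀ (star v₀)
      - (2 : ℂ) • vecMulVec v₀ (star v₀)) := by
    rw [hY₀, hX₀', mul_sub, sub_mul, mul_vmv, mul_vmv, vmv_mul H hHerm, vmv_mul H hHerm,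
      hv₀fix, ← hv₀def]
    congr 1
    rw [two_smul]
    abel
  have hX : H * rankOneProj ψ - rankOneProj ψ * H
      = vecMulVec v (star ψ) - vecMulVec ψ (star v) := by
    rw [rankOneProj, mul_vmv, vmv_mul H hHerm, hvdef]
  have hvψ : star v ⬝ᵥ ψ = (q : ℂ) := by
    rw [hvdef, star_mulVec, hHerm.eq, ← dotProduct_mulVec]
    exact hq
  have hvv : star v ⬝ᵥ v = (q : ℂ) := by
    rw [hvdef, star_mulVec, hHerm.eq, ← dotProduct_mulVec, mulVec_mulVec, hProj]
    exact hq
  constructor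
  · obtain ⟨a, b, hab⟩ := Submodule.mem_span_pair.mp hψS
    have hψab : ψ = a • ψ₀ + b • v₀ := by rw [← hab, hv₀def]
    have hvab : v = (a + b) • v₀ := by
      rw [hvdef, hψab, mulVec_add, mulVec_smul, mulVec_smul, hv₀fix, ← hv₀def, add_smul]
    refine ⟨((a + b) * (starRingEnd ℂ) a).re, (b * (starRingEnd ℂ) a).im, ?_⟩
    rw [hX, hX₀', hY₀', hψab, hvab]
    ext i j
    simp only [Matrix.sub_apply, Matrix.add_apply, Matrix.smul_apply, vecMulVec_apply,
      Pi.add_apply, Pi.smul_apply, Pi.star_apply, star_add, star_smul, smul_eq_mul,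
      Complex.star_def, map_add]
    linear_combination keylem a b (ψ₀ i) (v₀ i) ((starRingEnd ℂ) (ψ₀ j)) ((starRingEnd ℂ) (v₀ j))
  · rw [hX, frobNorm]
    have hct : ((vecMulVec v (star ψ) - vecMulVec ψ (star v))ᴴ
        * (vecMulVec v (star ψ) - vecMulVec ψ (star v))) =
        (vecMulVec ψ (star v) - vecMulVec v (star ψ))
        * (vecMulVec v (star ψ) - vecMulVec ψ (star v)) := by
      rw [conjTranspose_sub, vmv_conjT, vmv_conjT]
    rw [hct]
    have htr : trace ((vecMulVec ψ (star v) - vecMulVec v (star ψ))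
        * (vecMulVec v (star ψ) - vecMulVec ψ (star v)))
        = ((2 * q - 2 * q * q : ℝ) : ℂ) := by
      rw [sub_mul, mul_sub, mul_sub, trace_sub, trace_sub, trace_sub,
        trace_vmv_mul_vmv, trace_vmv_mul_vmv, trace_vmv_mul_vmv, trace_vmv_mul_vmv,
        hψunit, hq, hvψ, hvv]
      push_cast
      ring
    rw [htr, Complex.ofReal_re]
    congr 1
    ring
end

section
/- Let H be an N×N complex Hermitian matrix with H² = H, let |ψ0⟩ ∈ ℂ^N be a unit vector with q0 := ⟨ψ0|H|ψ0⟩ ∈ (0,1), and set u := H|ψ0⟩, v := (I − H)|ψ0⟩, X0 := [H, ψ0], Y0 := i[H, X0]. Then for all α, β ∈ ℂ, the vector |ψ⟩ := α u + β v satisfies: (i) ⟨ψ|H|ψ⟩ = |α|² q0; and (ii) if additionally ‖ψ‖ = 1, then with z := α β̄ the commutator of H with ψ := |ψ⟩⟨ψ| satisfies [H, ψ] = Re(z) X0 + Im(z) Y0. -/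
open Matrix

lemma mul_vecMulVec' {N : ℕ} (H : Matrix (Fin N) (Fin N) ℂ) (x y : Fin N → ℂ) :
    H * Matrix.vecMulVec x y = Matrix.vecMulVec (H *ᵥ x) y := by
  ext i j
  simp [Matrix.mul_apply, Matrix.vecMulVec_apply, Matrix.mulVec, dotProduct,
    Finset.sum_mul, mul_assoc]

lemma vecMulVec_mul' {N : ℕ} (H : Matrix (Fin N) (Fin N) ℂ) (x y : Fin N → ℂ) :
    Matrix.vecMulVec x y * H = Matrix.vecMulVec x (y ᵥ* H) := by
  ext i j
  simp [Matrix.mul_apply, Matrix.vecMulVec_apply, Matrix.vecMul, dotProduct,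
    Finset.mul_sum, mul_assoc]

theorem stmt_6 {N : ℕ} (H : Matrix (Fin N) (Fin N) ℂ)
    (hHerm : H.IsHermitian) (hProj : H * H = H)
    (ψ₀ : Fin N → ℂ) (hψ₀ : star ψ₀ ⬝ᵥ ψ₀ = 1)
    (q₀ : ℝ) (hq₀ : star ψ₀ ⬝ᵥ (H *ᵥ ψ₀) = (q₀ : ℂ))
    (hq₀pos : 0 < q₀) (hq₀lt : q₀ < 1)
    (u v : Fin N → ℂ) (hu : u = H *ᵥ ψ₀) (hv : v = ψ₀ - H *ᵥ ψ₀)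
    (X₀ Y₀ : Matrix (Fin N) (Fin N) ℂ)
    (hX₀ : X₀ = H * rankOneProj ψ₀ - rankOneProj ψ₀ * H)
    (hY₀ : Y₀ = Complex.I • (H * X₀ - X₀ * H)) :
    ∀ α β : ℂ,
      (star (α • u + β • v) ⬝ᵥ (H *ᵥ (α • u + β • v))
          = ((Complex.normSq α * q₀ : ℝ) : ℂ))
      ∧ (star (α • u + β • v) ⬝ᵥ (α • u + β • v) = 1 →
          H * rankOneProj (α • u + β • v) - rankOneProj (α • u + β • v) * H
            = (((α * (starRingEnd ℂ) β).re : ℝ) : ℂ) • X₀ +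
              (((α * (starRingEnd ℂ) β).im : ℝ) : ℂ) • Y₀) := by
  intro α β
  -- basic facts
  have hstarmul : ∀ x : Fin N → ℂ, star (H *ᵥ x) = star x ᵥ* H := by
    intro x
    rw [Matrix.star_mulVec, hHerm.eq]
  have hHu : H *ᵥ u = u := by
    rw [hu, Matrix.mulVec_mulVec, hProj]
  have hHv : H *ᵥ v = 0 := by
    rw [hv, Matrix.mulVec_sub, Matrix.mulVec_mulVec, hProj, sub_self]
  have hψ₀uv : ψ₀ = u + v := by
    rw [hu, hv]; ring
  have huu : star u ⬝ᵥ u = (q₀ : ℂ) := by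
    have : star u ⬝ᵥ u = star ψ₀ ⬝ᵥ (H *ᵥ ψ₀) := by
      conv_lhs => rw [hu, hstarmul, ← Matrix.dotProduct_mulVec,
        Matrix.mulVec_mulVec, hProj]
    rw [this, hq₀]
  have hvu : star v ⬝ᵥ u = 0 := by
    rw [hv, hu]
    have : star (ψ₀ - H *ᵥ ψ₀) = star ψ₀ - star (H *ᵥ ψ₀) := by
      ext k; simp [sub_mul]
    rw [this, sub_dotProduct, hq₀]
    have : star (H *ᵥ ψ₀) ⬝ᵥ (H *ᵥ ψ₀) = (q₀ : ℂ) := by rw [← hu, huu]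
    rw [this, sub_self]
  have huv : star u ⬝ᵥ v = 0 := by
    have := congrArg star hvu
    rwa [Matrix.star_dotProduct, star_star, star_zero] at this
  -- action of H on ψ
  have hHψ : H *ᵥ (α • u + β • v) = α • u := by
    rw [Matrix.mulVec_add, Matrix.mulVec_smul, Matrix.mulVec_smul, hHu, hHv,
      smul_zero, add_zero]
  constructor
  · -- part (i)
    rw [hHψ]
    have : star (α • u + β • v) = (starRingEnd ℂ α) • star u + (starRingEnd ℂ β) • star v := by
      ext k; simp [mul_comm]
    rw [this]
    simp only [add_dotProduct, smul_dotProduct, dotProduct_smul,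
      huu, hvu, smul_eq_mul, smul_smul]
    push_cast
    rw [Complex.normSq_eq_conj_mul_self]
    ring
  · -- part (ii)
    intro _
    have hstarψ : star (α • u + β • v)
        = (starRingEnd ℂ α) • star u + (starRingEnd ℂ β) • star v := by
      ext k; simp [mul_comm]
    have hvmH : star (α • u + β • v) ᵥ* H = (starRingEnd ℂ α) • star u := by
      rw [← hstarmul, hHψ]
      ext k; simp [mul_comm]
    have hX₀' : X₀ = Matrix.vecMulVec u (star u + star v)
        - Matrix.vecMulVec (u + v) (star u) := by
      rw [hX₀, rankOneProj, mul_vecMulVec', vecMulVec_mul', ← hstarmul, hψ₀uv,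
        Matrix.mulVec_add, hHu, hHv, add_zero]
      congr 1
      ext k; simp
    have hsu : star u ᵥ* H = star u := by rw [← hstarmul, hHu]
    have hsv : star v ᵥ* H = 0 := by rw [← hstarmul, hHv]; ext k; simp
    have hComm : H * X₀ - X₀ * H
        = Matrix.vecMulVec u (star v) + Matrix.vecMulVec v (star u) := by
      rw [hX₀']
      rw [Matrix.mul_sub, Matrix.sub_mul, mul_vecMulVec', mul_vecMulVec',
        vecMulVec_mul', vecMulVec_mul', hHu, Matrix.mulVec_add, hHu, hHv, add_zero,
        Matrix.add_vecMul, hsu, hsv, add_zero]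
      ext i j
      simp [Matrix.vecMulVec_apply]
      ring
    -- coefficient identities
    set z := α * (starRingEnd ℂ) β with hz
    have hre2 : 2 * ((z.re : ℝ) : ℂ) = z + (starRingEnd ℂ) z := by
      rw [Complex.add_conj]; push_cast; ring
    have him2 : 2 * Complex.I * ((z.im : ℝ) : ℂ) = z - (starRingEnd ℂ) z := by
      rw [Complex.sub_conj]; push_cast; ring
    have hzbar : (starRingEnd ℂ) z = (starRingEnd ℂ) α * β := by
      rw [hz]; simp [mul_comm]
    rw [hzbar] at hre2 him2
    -- final entrywise computation
    rw [hY₀, hComm, hX₀', rankOneProj, mul_vecMulVec', vecMulVec_mul', hHψ, hvmH]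
    ext i j
    simp only [Matrix.sub_apply, Matrix.add_apply, Matrix.smul_apply,
      Matrix.vecMulVec_apply, Pi.add_apply, Pi.smul_apply, Pi.star_apply,
      smul_eq_mul, star_add, star_smul]
    simp only [Pi.add_apply, Pi.smul_apply, Pi.star_apply, smul_eq_mul,
      RCLike.star_def, _root_.map_mul, Complex.star_def]
    linear_combination
      (v i * (starRingEnd ℂ) (u j) - u i * (starRingEnd ℂ) (v j)) / 2 * hre2
      - (u i * (starRingEnd ℂ) (v j) + v i * (starRingEnd ℂ) (u j)) / 2 * him2
end

section
/- Let H be an N×N complex Hermitian matrix with H² = H, let |ψ0⟩ ∈ ℂ^N be a unit vector, ψ0 = |ψ0⟩⟨ψ0|, X0 := [H, ψ0], Y0 := i[H, X0]. Fix x, y ∈ ℝ. Then for every unitary U, the curve γ(t) := e^{i(π/2)H} e^{−i t((x+y)/2) ψ0} e^{−iπH} e^{i t((x−y)/2) ψ0} e^{i(π/2)H} e^{i t y ψ0} U (t ≥ 0) satisfies γ(0) = U, and γ is differentiable at t = 0 with γ′(0) = (x X0 + y Y0) U. (This is the 6-factor Grover-compatible retraction.) -/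
open Matrix

attribute [local instance] Matrix.frobeniusNormedAddCommGroup Matrix.frobeniusNormedSpace

section Aux

open NormedSpace
open scoped Nat

attribute [local instance] Matrix.frobeniusNormedRing Matrix.frobeniusNormedAlgebra

set_option maxHeartbeats 1000000 in
lemma aux_exp_idem {N : ℕ} (H : Matrix (Fin N) (Fin N) ℂ) (h : H * H = H) (c : ℂ) :
    exp (c • H) = 1 + (Complex.exp c - 1) • H := by
  have hpow : ∀ n : ℕ, H ^ (n + 1) = H := by
    intro n
    induction n with
    | zero => simp
    | succ k ih => rw [pow_succ, ih, h]
  have hs : Summable (fun n : ℕ => (n !⁻¹ : ℂ) • (c • H) ^ n) := expSeries_summable' _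
  have hsc : Summable (fun n : ℕ => (n !⁻¹ : ℂ) • c ^ n) := expSeries_summable' (𝔸 := ℂ) _
  have hsc1 : Summable (fun n : ℕ => ((n + 1)!⁻¹ : ℂ) • c ^ (n + 1)) :=
    (summable_nat_add_iff 1).mpr hsc
  have hexpc : Complex.exp c = 1 + ∑' n : ℕ, ((n + 1)!⁻¹ : ℂ) • c ^ (n + 1) := by
    rw [Complex.exp_eq_exp_ℂ]; simp only [exp_eq_tsum (𝕂 := ℂ)]; rw [Summable.tsum_eq_zero_add hsc]
    simp
  simp only [exp_eq_tsum (𝕂 := ℂ)]; rw [Summable.tsum_eq_zero_add hs]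
  have hterm : ∀ n : ℕ, ((n + 1)!⁻¹ : ℂ) • (c • H) ^ (n + 1)
      = (((n + 1)!⁻¹ : ℂ) • c ^ (n + 1)) • H := by
    intro n
    rw [smul_pow, hpow, smul_smul, smul_eq_mul]
  simp only [hterm]
  rw [Summable.tsum_smul_const]
  · simp [hexpc]
  · exact hsc1

set_option maxHeartbeats 1000000 in
lemma aux_gate_hasDerivAt {N : ℕ} (M : Matrix (Fin N) (Fin N) ℂ) (c : ℝ) :
    HasDerivAt (fun t : ℝ => expGate M (c * t)) ((Complex.I * (c : ℂ)) • M) 0 := by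
  have h := hasDerivAt_exp_smul_const (𝕂 := ℝ) ((Complex.I * (c : ℂ)) • M) (0 : ℝ)
  have heq : (fun u : ℝ => exp (u • (Complex.I * (c : ℂ)) • M))
      = fun t : ℝ => expGate M (c * t) := by
    funext u
    rw [expGate]
    congr 1
    rw [← smul_assoc]
    congr 1
    rw [Complex.real_smul]
    push_cast
    ring
  erw [heq] at h
  simp at h; exact h

set_option maxHeartbeats 1000000 in
lemma aux_gate_zero {N : ℕ} (M : Matrix (Fin N) (Fin N) ℂ) : expGate M 0 = 1 := by
  simp [expGate, exp_zero]

set_option maxHeartbeats 1000000 in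
lemma aux_gate_idem {N : ℕ} (H : Matrix (Fin N) (Fin N) ℂ) (h : H * H = H) (θ : ℝ) :
    expGate H θ = 1 + (Complex.exp (Complex.I * θ) - 1) • H := by
  rw [expGate, aux_exp_idem H h]

end Aux

set_option maxHeartbeats 4000000 in
theorem stmt_9 {N : ℕ} (H : Matrix (Fin N) (Fin N) ℂ)
    (hHerm : H.IsHermitian) (hProj : H * H = H)
    (ψ₀ : Fin N → ℂ) (hψ₀ : star ψ₀ ⬝ᵥ ψ₀ = 1)
    (X₀ Y₀ : Matrix (Fin N) (Fin N) ℂ)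
    (hX₀ : X₀ = H * rankOneProj ψ₀ - rankOneProj ψ₀ * H)
    (hY₀ : Y₀ = Complex.I • (H * X₀ - X₀ * H))
    (x y : ℝ)
    (U : Matrix (Fin N) (Fin N) ℂ) (hU : U ∈ Matrix.unitaryGroup (Fin N) ℂ)
    (γ : ℝ → Matrix (Fin N) (Fin N) ℂ)
    (hγ : γ = fun t =>
      expGate H (Real.pi / 2) * expGate (rankOneProj ψ₀) (-(t * ((x + y) / 2))) *
        expGate H (-Real.pi) * expGate (rankOneProj ψ₀) (t * ((x - y) / 2)) *
        expGate H (Real.pi / 2) * expGate (rankOneProj ψ₀) (t * y) * U) :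
    γ 0 = U ∧
    HasDerivWithinAt γ (((x : ℂ) • X₀ + (y : ℂ) • Y₀) * U) (Set.Ici (0 : ℝ)) 0 := by
  set P := rankOneProj ψ₀ with hP
  have hProj' : ∀ A : Matrix (Fin N) (Fin N) ℂ, H * (H * A) = H * A := by
    intro A; rw [← mul_assoc, hProj]
  -- explicit values of the H-gates
  have hexpI : Complex.exp (Complex.I * ((Real.pi / 2 : ℝ) : ℂ)) = Complex.I := by
    rw [mul_comm, Complex.exp_mul_I, ← Complex.ofReal_cos, ← Complex.ofReal_sin,
      Real.cos_pi_div_two, Real.sin_pi_div_two]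
    simp
  have hexpPi : Complex.exp (Complex.I * ((-Real.pi : ℝ) : ℂ)) = -1 := by
    rw [mul_comm, Complex.exp_mul_I, ← Complex.ofReal_cos, ← Complex.ofReal_sin,
      Real.cos_neg, Real.sin_neg, Real.cos_pi, Real.sin_pi]
    simp
  have hC1 : expGate H (Real.pi / 2) = 1 + (Complex.I - 1) • H := by
    rw [aux_gate_idem H hProj, hexpI]
  have hC2 : expGate H (-Real.pi) = 1 + (-2 : ℂ) • H := by
    rw [aux_gate_idem H hProj, hexpPi]
    norm_num
  -- rewrite γ with angles of the shape c * t
  have hγ' : γ = fun t =>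
      expGate H (Real.pi / 2) * expGate P (-((x + y) / 2) * t) *
        expGate H (-Real.pi) * expGate P ((x - y) / 2 * t) *
        expGate H (Real.pi / 2) * expGate P (y * t) * U := by
    rw [hγ]
    funext t
    congr 2
    · congr 3
      · congr 2
        · congr 1
          ring
      · ring
    · ring
  -- value at 0
  have hg0 : ∀ c : ℝ, expGate P (c * 0) = 1 := by
    intro c; rw [mul_zero, aux_gate_zero]
  have hval : γ 0 = U := by
    rw [hγ']
    simp only [mul_zero, zero_mul, neg_zero]
    simp only [aux_gate_zero, mul_one]
    rw [hC1, hC2]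
    simp only [mul_add, add_mul, mul_one, one_mul, smul_mul_assoc, mul_smul_comm, smul_smul,
      mul_assoc, hProj, hProj']
    match_scalars <;> (apply Complex.ext <;> simp <;> ring)
  refine ⟨hval, ?_⟩
  -- derivative
  letI : NormedRing (Matrix (Fin N) (Fin N) ℂ) := Matrix.frobeniusNormedRing
  letI : NormedAlgebra ℝ (Matrix (Fin N) (Fin N) ℂ) := Matrix.frobeniusNormedAlgebra
  have h1 := aux_gate_hasDerivAt P (-((x + y) / 2))
  have h2 := aux_gate_hasDerivAt P ((x - y) / 2)
  have h3 := aux_gate_hasDerivAt P y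
  have hF := ((((((h1.const_mul (expGate H (Real.pi / 2))).mul_const
      (expGate H (-Real.pi))).mul h2).mul_const (expGate H (Real.pi / 2))).mul
      h3).mul_const U)
  simp only [Pi.mul_apply, hg0, mul_one, one_mul] at hF
  rw [hγ']
  refine (hF.congr_deriv ?_).hasDerivWithinAt
  rw [hC1, hC2, hY₀, hX₀]
  simp only [mul_add, add_mul, mul_sub, sub_mul, smul_mul_assoc, mul_smul_comm, smul_smul,
    smul_sub, smul_add, mul_one, one_mul, mul_assoc, hProj, hProj']
  match_scalars <;> (apply Complex.ext <;> simp <;> ring)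
end

section
/- Let H be an N×N complex Hermitian matrix with H² = H, let |ψ0⟩ ∈ ℂ^N be a unit vector, ψ0 = |ψ0⟩⟨ψ0|, and f(U) := Tr(H U ψ0 U†). Then the local Riemannian Polyak–Łojasiewicz inequality holds: for every unitary U with f(U) ≥ 1/2, one has ‖grad f(U)‖_F² ≥ 1 − f(U), where grad f(U) = [H, U ψ0 U†] U. -/
open Matrix

/-- The cost value `f(U) = Tr(H U ψ0 U†)` (its real part; it is in fact real). -/
noncomputable def costVal {N : ℕ} (H P U : Matrix (Fin N) (Fin N) ℂ) : ℝ :=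
  (Matrix.trace (H * (U * P * Uᴴ))).re

/-- The Riemannian gradient `grad f(U) = [H, U ψ0 U†] U`. -/
noncomputable def rieGrad {N : ℕ} (H P U : Matrix (Fin N) (Fin N) ℂ) :
    Matrix (Fin N) (Fin N) ℂ :=
  (H * (U * P * Uᴴ) - (U * P * Uᴴ) * H) * U

lemma my_mul_vecMulVec {N : ℕ} (A : Matrix (Fin N) (Fin N) ℂ) (w u : Fin N → ℂ) :
    A * vecMulVec w u = vecMulVec (A *ᵥ w) u := by
  ext i j
  simp [Matrix.mul_apply, vecMulVec_apply, Matrix.mulVec, dotProduct,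
    Finset.sum_mul, mul_assoc]

lemma my_vecMulVec_mul {N : ℕ} (A : Matrix (Fin N) (Fin N) ℂ) (w u : Fin N → ℂ) :
    vecMulVec w u * A = vecMulVec w (u ᵥ* A) := by
  ext i j
  simp [Matrix.mul_apply, vecMulVec_apply, Matrix.vecMul, dotProduct,
    Finset.mul_sum, mul_assoc]

lemma my_trace_vecMulVec {N : ℕ} (w u : Fin N → ℂ) :
    Matrix.trace (vecMulVec w u) = u ⬝ᵥ w := by
  simp [Matrix.trace, Matrix.diag, vecMulVec_apply, dotProduct, mul_comm]

lemma my_vecMulVec_mul_vecMulVec {N : ℕ} (w u w' u' : Fin N → ℂ) :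
    vecMulVec w u * vecMulVec w' u' = (u ⬝ᵥ w') • vecMulVec w u' := by
  ext i j
  simp only [Matrix.mul_apply, vecMulVec_apply, Matrix.smul_apply, dotProduct,
    smul_eq_mul, Finset.sum_mul]
  exact Finset.sum_congr rfl fun k _ => by ring

lemma my_conjTranspose_vecMulVec {N : ℕ} (a b : Fin N → ℂ) :
    (vecMulVec a (star b))ᴴ = vecMulVec b (star a) := by
  ext i j
  simp [Matrix.conjTranspose_apply, vecMulVec_apply, mul_comm]

lemma my_star_dot_self {N : ℕ} (x : Fin N → ℂ) :
    star x ⬝ᵥ x = ((∑ i, Complex.normSq (x i) : ℝ) : ℂ) := by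
  push_cast
  refine Finset.sum_congr rfl fun i _ => ?_
  simp only [Pi.star_apply, Complex.star_def]
  rw [mul_comm, Complex.mul_conj]

theorem stmt_16 {N : ℕ} (H : Matrix (Fin N) (Fin N) ℂ)
    (hHerm : H.IsHermitian) (hProj : H * H = H)
    (ψ₀ : Fin N → ℂ) (hψ₀ : star ψ₀ ⬝ᵥ ψ₀ = 1) :
    ∀ U ∈ Matrix.unitaryGroup (Fin N) ℂ,
      1 / 2 ≤ costVal H (rankOneProj ψ₀) U →
      1 - costVal H (rankOneProj ψ₀) U
        ≤ frobNorm (rieGrad H (rankOneProj ψ₀) U) ^ 2 := by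
  intro U hU hcost
  have hH : Hᴴ = H := hHerm
  have hU2 : U * Uᴴ = 1 := by
    have := (Matrix.mem_unitaryGroup_iff).mp hU
    rwa [Matrix.star_eq_conjTranspose] at this
  set v : Fin N → ℂ := U *ᵥ ψ₀ with hv_def
  set w : Fin N → ℂ := H *ᵥ v with hw_def
  set c : ℂ := star v ⬝ᵥ w with hc_def
  -- star of v and w as vecMuls
  have hsv : star v = star ψ₀ ᵥ* Uᴴ := star_mulVec U ψ₀
  have hsw : star w = star v ᵥ* H := by
    rw [hw_def, star_mulVec, hH]
  -- norm of v
  have hv1 : star v ⬝ᵥ v = 1 := by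
    rw [hsv, hv_def, Matrix.dotProduct_mulVec, Matrix.vecMul_vecMul]
    have hU1 : Uᴴ * U = 1 := by
      have := Matrix.mem_unitaryGroup_iff'.mp hU
      rwa [Matrix.star_eq_conjTranspose] at this
    rw [hU1, Matrix.vecMul_one, hψ₀]
  -- inner products
  have hww : star w ⬝ᵥ w = c := by
    rw [hsw, ← Matrix.dotProduct_mulVec, hw_def, Matrix.mulVec_mulVec, hProj, hc_def, hw_def]
  have hwv : star w ⬝ᵥ v = c := by
    rw [hsw, ← Matrix.dotProduct_mulVec, hc_def, hw_def]
  -- the rotated projector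
  have hQ : U * rankOneProj ψ₀ * Uᴴ = vecMulVec v (star v) := by
    rw [rankOneProj, my_mul_vecMulVec, my_vecMulVec_mul, ← hsv, hv_def]
  set A1 : Matrix (Fin N) (Fin N) ℂ := vecMulVec w (star v) with hA1
  set A2 : Matrix (Fin N) (Fin N) ℂ := vecMulVec v (star w) with hA2
  have hHQ : H * (vecMulVec v (star v)) = A1 := by
    rw [my_mul_vecMulVec, ← hw_def]
  have hQH : (vecMulVec v (star v)) * H = A2 := by
    rw [my_vecMulVec_mul, ← hsw]
  -- the gradient
  have hG : rieGrad H (rankOneProj ψ₀) U = (A1 - A2) * U := by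
    rw [rieGrad, hQ, hHQ, hQH]
  -- trace computation
  have htrA1 : Matrix.trace A1 = c := by rw [hA1, my_trace_vecMulVec, hc_def]
  have htrA2 : Matrix.trace A2 = c := by rw [hA2, my_trace_vecMulVec, hwv]
  have htr : Matrix.trace ((rieGrad H (rankOneProj ψ₀) U)ᴴ * rieGrad H (rankOneProj ψ₀) U)
      = 2 * c - 2 * c ^ 2 := by
    rw [hG]
    have h1 : Matrix.trace (((A1 - A2) * U)ᴴ * ((A1 - A2) * U))
        = Matrix.trace ((A1 - A2)ᴴ * (A1 - A2)) := by
      rw [Matrix.trace_mul_comm, Matrix.conjTranspose_mul, Matrix.mul_assoc,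
        ← Matrix.mul_assoc U Uᴴ _, hU2, Matrix.one_mul, Matrix.trace_mul_comm]
    rw [h1]
    have hGc : (A1 - A2)ᴴ = A2 - A1 := by
      rw [Matrix.conjTranspose_sub, hA1, hA2, my_conjTranspose_vecMulVec w v,
        my_conjTranspose_vecMulVec v w]
    rw [hGc, Matrix.sub_mul, Matrix.mul_sub, Matrix.mul_sub]
    have e11 : A1 * A1 = c • A1 := by
      rw [hA1, my_vecMulVec_mul_vecMulVec, hc_def]
    have e12 : A1 * A2 = (1 : ℂ) • vecMulVec w (star w) := by
      rw [hA1, hA2, my_vecMulVec_mul_vecMulVec, hv1]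
    have e21 : A2 * A1 = c • vecMulVec v (star v) := by
      rw [hA2, hA1, my_vecMulVec_mul_vecMulVec, hww]
    have e22 : A2 * A2 = c • A2 := by
      rw [hA2, my_vecMulVec_mul_vecMulVec, hwv]
    rw [e11, e12, e21, e22]
    simp only [Matrix.trace_sub, Matrix.trace_smul, htrA1, htrA2, my_trace_vecMulVec,
      hww, hv1, hwv, smul_eq_mul]
    ring
  -- realness of c
  set r : ℝ := (∑ i, Complex.normSq (w i)) with hr
  have hcr : c = (r : ℂ) := by rw [← hww, my_star_dot_self, hr]
  have hr0 : 0 ≤ r := Finset.sum_nonneg fun i _ => Complex.normSq_nonneg _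
  -- r ≤ 1
  have hr1 : r ≤ 1 := by
    have h1c : star (v - w) ⬝ᵥ (v - w) = 1 - c := by
      have : star (v - w) = star v - star w := by simp
      rw [this, sub_dotProduct, dotProduct_sub, dotProduct_sub,
        hv1, hww, hwv, ← hc_def]
      ring
    have := my_star_dot_self (v - w)
    rw [h1c, hcr] at this
    have him : (1 : ℝ) - r = ∑ i, Complex.normSq ((v - w) i) := by
      have := congrArg Complex.re this
      simpa using this
    have : 0 ≤ (1 : ℝ) - r := him ▸ Finset.sum_nonneg fun i _ => Complex.normSq_nonneg _
    linarith
  -- costVal = r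
  have hcost_eq : costVal H (rankOneProj ψ₀) U = r := by
    rw [costVal, hQ, hHQ, htrA1, hcr, Complex.ofReal_re]
  -- frobNorm squared
  have hfr : frobNorm (rieGrad H (rankOneProj ψ₀) U) ^ 2 = 2 * r - 2 * r ^ 2 := by
    have hre : (Matrix.trace ((rieGrad H (rankOneProj ψ₀) U)ᴴ * rieGrad H (rankOneProj ψ₀) U)).re
        = 2 * r - 2 * r ^ 2 := by
      rw [htr, hcr]
      have : 2 * (r : ℂ) - 2 * (r : ℂ) ^ 2 = ((2 * r - 2 * r ^ 2 : ℝ) : ℂ) := by push_cast; ring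
      rw [this, Complex.ofReal_re]
    rw [frobNorm, hre, Real.sq_sqrt]
    nlinarith
  rw [hcost_eq] at hcost ⊢
  rw [hfr]
  nlinarith
end

section
/- Let L ≥ 2 and let (q_k)_{k≥0} be a real sequence with q_k ∈ [0,1] for all k and q_0 ∈ (0,1), satisfying the recurrence q_{k+1} ≥ q_k + q_k(1 − q_k)/L for all k ≥ 0. Then for every ε with 0 < ε ≤ q_0 and every integer T ≥ 6 L · log(1/ε), one has 1 − q_T ≤ ε. -/
theorem stmt_18 (L : ℝ) (hL : 2 ≤ L) (q : ℕ → ℝ)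
    (hrange : ∀ k, 0 ≤ q k ∧ q k ≤ 1) (hq0pos : 0 < q 0) (hq0lt : q 0 < 1)
    (hstep : ∀ k, q k + q k * (1 - q k) / L ≤ q (k + 1)) :
    ∀ ε : ℝ, 0 < ε → ε ≤ q 0 →
      ∀ T : ℕ, 6 * L * Real.log (1 / ε) ≤ (T : ℝ) → 1 - q T ≤ ε := by
  have hLpos : (0:ℝ) < L := by linarith
  have hqpos : ∀ k, 0 < q k := by
    intro k
    induction k with
    | zero => exact hq0pos
    | succ n ih =>
      have h1 := hstep n
      have h2 := (hrange n).2
      have : 0 ≤ q n * (1 - q n) / L := by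
        apply div_nonneg (mul_nonneg (le_of_lt ih) (by linarith)) (le_of_lt hLpos)
      linarith
  set c : ℝ := L / (L + 1) with hc
  have hcpos : 0 < c := by positivity
  have hclt : c < 1 := by
    rw [hc, div_lt_one (by linarith)]; linarith
  have key : ∀ k, (1 - q k) / q k ≤ (1 - q 0) / q 0 * c ^ k := by
    intro k
    induction k with
    | zero => simp
    | succ n ih =>
      have ha := hqpos n
      have hb := hqpos (n+1)
      have ha1 := (hrange n).2
      have hb1 := (hrange (n+1)).2
      have hst := hstep n
      have hLb : L * (q n) + q n * (1 - q n) ≤ L * q (n+1) := by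
        have h := mul_le_mul_of_nonneg_left hst (le_of_lt hLpos)
        have hd : L * (q n + q n * (1 - q n) / L) = L * q n + q n * (1 - q n) := by
          field_simp
        linarith [hd ▸ h]
      have step : (1 - q (n+1)) / q (n+1) ≤ (1 - q n) / q n * c := by
        have hrhs : (1 - q n) / q n * c = ((1 - q n) * L) / (q n * (L + 1)) := by
          rw [hc]; field_simp
        rw [hrhs, div_le_div_iff₀ hb (by positivity)]
        nlinarith [mul_nonneg (mul_nonneg ha.le (sub_nonneg.2 ha1)) (sub_nonneg.2 hb1),
          mul_nonneg ha.le (sub_nonneg.2 ha1)]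
      calc (1 - q (n+1)) / q (n+1) ≤ (1 - q n) / q n * c := step
        _ ≤ (1 - q 0) / q 0 * c ^ n * c := by
            exact mul_le_mul_of_nonneg_right ih hcpos.le
        _ = (1 - q 0) / q 0 * c ^ (n+1) := by ring
  intro ε hε hεq0 T hT
  have hεlt : ε < 1 := lt_of_le_of_lt hεq0 hq0lt
  have hlogpos : 0 < Real.log (1 / ε) := by
    apply Real.log_pos
    rw [one_div]
    exact (one_lt_inv₀ hε).2 hεlt
  -- bound c^T ≤ ε^2
  have hcT : c ^ T ≤ ε ^ 2 := by
    have hlogc : Real.log c ≤ -(1 / (L + 1)) := by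
      have h1 : Real.log c ≤ c - 1 := Real.log_le_sub_one_of_pos hcpos
      have : c - 1 = -(1 / (L + 1)) := by
        rw [hc]; field_simp; ring
      linarith
    have hT2 : 2 * (L + 1) * Real.log (1 / ε) ≤ (T : ℝ) := by
      nlinarith
    have h3 : (T : ℝ) * Real.log c ≤ 2 * Real.log ε := by
      have hTc : (T : ℝ) * Real.log c ≤ (T : ℝ) * (-(1 / (L + 1))) :=
        mul_le_mul_of_nonneg_left hlogc (Nat.cast_nonneg T)
      have hlog1 : Real.log (1 / ε) = - Real.log ε := by
        rw [one_div, Real.log_inv]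
      rw [hlog1] at hT2
      have hLp1 : (0:ℝ) < L + 1 := by linarith
      have hinv : (L + 1) * (1 / (L + 1)) = 1 := by field_simp
      nlinarith
    have e1 : c ^ T = Real.exp ((T : ℝ) * Real.log c) := by
      rw [← Real.log_pow, Real.exp_log (pow_pos hcpos T)]
    have e2 : ε ^ 2 = Real.exp (2 * Real.log ε) := by
      rw [show (2:ℝ) * Real.log ε = Real.log (ε ^ 2) by
        rw [Real.log_pow]; norm_num, Real.exp_log (by positivity)]
    rw [e1, e2]
    exact Real.exp_le_exp.2 h3
  have hqT := hqpos T
  have hqT1 := (hrange T).2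
  have h1 : 1 - q T ≤ (1 - q T) / q T := by
    rw [le_div_iff₀ hqT]
    nlinarith
  have h2 : (1 - q 0) / q 0 ≤ 1 / ε := by
    apply div_le_div₀ (by linarith) (by linarith) hε hεq0
  calc 1 - q T ≤ (1 - q T) / q T := h1
    _ ≤ (1 - q 0) / q 0 * c ^ T := key T
    _ ≤ (1 / ε) * ε ^ 2 := by
        apply mul_le_mul h2 hcT (pow_nonneg hcpos.le T) (by positivity)
    _ = ε := by field_simp
end
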